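/- Let p = [2^{2k}, 1^{2n−4k+1}] be a partition of 2n+1 (type B spherical orbit, k ≠ n/2). The partitions q of 2n+1 with at most 2 distinct parts such that the B-collapse of q^t equals p are exactly q = [2n−2k+1, 2k] and q = [2n−2k, 2k+1]. -/

import Mathlib

/-- The transpose (conjugate) of a partition, given as a multiset of parts. -/
def conjugatePartition (a : Multiset ℕ) : Multiset ℕ :=
  ((Multiset.range a.sum).map (fun i => Multiset.card (a.filter (fun p => i < p)))).filter
    (fun x => 0 < x)

/-- Dominance order on partitions given as multisets of parts:
`a` is dominated by `b`. -/
def domLe (a b : Multiset ℕ) : Prop :=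
  ∀ k : ℕ, (((a.sort (· ≤ ·)).reverse.take k).sum ≤ ((b.sort (· ≤ ·)).reverse.take k).sum)

/-- Type B condition: every even part occurs with even multiplicity. -/
def typeBPartition (a : Multiset ℕ) : Prop :=
  ∀ p : ℕ, Even p → Even (a.count p)

/-- `r` is the B-collapse of `q`: the largest partition of the same number
dominated by `q` in which every even part occurs with even multiplicity. -/
def isBCollapse (q r : Multiset ℕ) : Prop :=
  r.sum = q.sum ∧ (∀ x ∈ r, 0 < x) ∧ typeBPartition r ∧ domLe r q ∧
  ∀ s : Multiset ℕ, (∀ x ∈ s, 0 < x) → s.sum = q.sum → typeBPartition s → domLe s q →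
    domLe s r

def Sj (a : Multiset ℕ) (j : ℕ) : ℕ := ((a.sort (· ≤ ·)).reverse.take j).sum

lemma domLe_iff {a b : Multiset ℕ} : domLe a b ↔ ∀ j, Sj a j ≤ Sj b j := Iff.rfl

lemma sorted_rep_rep {A B x y : ℕ} (h : B ≤ A) :
    List.Pairwise (· ≤ ·) (List.replicate y B ++ List.replicate x A) := by
  rw [List.pairwise_append]
  refine ⟨?_, ?_, ?_⟩
  · exact List.pairwise_replicate.2 (Or.inr le_rfl)
  · exact List.pairwise_replicate.2 (Or.inr le_rfl)
  · intro a ha b hb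
    rw [List.eq_of_mem_replicate ha, List.eq_of_mem_replicate hb]; exact h

lemma sort_rep_rep {A B x y : ℕ} (h : B ≤ A) :
    (Multiset.replicate x A + Multiset.replicate y B).sort (· ≤ ·)
      = List.replicate y B ++ List.replicate x A := by
  refine (fun p s1 s2 => List.Perm.eq_of_pairwise' s1 s2 p :
    List.Perm _ _ → List.Pairwise (· ≤ ·) _ → List.Pairwise (· ≤ ·) _ → _) ?_ ?_ ?_
  · rw [← Multiset.coe_eq_coe, Multiset.sort_eq, ← Multiset.coe_add,
      Multiset.coe_replicate, Multiset.coe_replicate, add_comm]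
  · exact Multiset.pairwise_sort _ _
  · exact sorted_rep_rep h

lemma Sj_two {A B x y : ℕ} (h : B ≤ A) (j : ℕ) :
    Sj (Multiset.replicate x A + Multiset.replicate y B) j
      = A * min j x + B * min (j - x) y := by
  rw [Sj, sort_rep_rep h, List.reverse_append, List.reverse_replicate, List.reverse_replicate,
    List.take_append, List.take_replicate, List.take_replicate,
    List.sum_append, List.sum_replicate, List.sum_replicate, List.length_replicate,
    smul_eq_mul, smul_eq_mul, mul_comm A, mul_comm B]

lemma sum_two (A B x y : ℕ) :
    (Multiset.replicate x A + Multiset.replicate y B).sum = x * A + y * B := by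
  rw [Multiset.sum_add, Multiset.sum_replicate, Multiset.sum_replicate, smul_eq_mul, smul_eq_mul]

lemma mem_two {A B x y z : ℕ} (h : z ∈ Multiset.replicate x A + Multiset.replicate y B) :
    z = A ∨ z = B := by
  rw [Multiset.mem_add] at h
  rcases h with h | h
  · exact Or.inl (Multiset.eq_of_mem_replicate h)
  · exact Or.inr (Multiset.eq_of_mem_replicate h)

lemma count_two (A B x y p : ℕ) :
    (Multiset.replicate x A + Multiset.replicate y B).count p
      = (if A = p then x else 0) + (if B = p then y else 0) := by
  rw [Multiset.count_add, Multiset.count_replicate, Multiset.count_replicate]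

lemma le_Sj_one {s : Multiset ℕ} {x : ℕ} (hx : x ∈ s) : x ≤ Sj s 1 := by
  have hmem : x ∈ s.sort (· ≤ ·) := (Multiset.mem_sort _).2 hx
  have hsorted : (s.sort (· ≤ ·)).Pairwise (· ≤ ·) := Multiset.pairwise_sort _ _
  have hrev : (s.sort (· ≤ ·)).reverse.Pairwise (fun a b => b ≤ a) :=
    List.pairwise_reverse.2 hsorted
  have hmemr : x ∈ (s.sort (· ≤ ·)).reverse := List.mem_reverse.2 hmem
  rcases h : (s.sort (· ≤ ·)).reverse with _ | ⟨hd, tl⟩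
  · rw [h] at hmemr; simp at hmemr
  · rw [h] at hmemr hrev
    rw [Sj, h]
    simp only [List.take_succ_cons, List.take_zero, List.sum_cons, List.sum_nil, add_zero]
    rcases List.mem_cons.1 hmemr with rfl | hmem2
    · exact le_rfl
    · exact (List.pairwise_cons.1 hrev).1 x hmem2

lemma eq_two_of_le_two {s : Multiset ℕ} (hpos : ∀ x ∈ s, 0 < x) (hle : ∀ x ∈ s, x ≤ 2) :
    s = Multiset.replicate (s.count 2) 2 + Multiset.replicate (s.count 1) 1 := by
  ext p
  rw [count_two]
  rcases eq_or_ne p 2 with rfl | h2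
  · simp
  rcases eq_or_ne p 1 with rfl | h1
  · simp
  have : p ∉ s := by
    intro hp
    have := hpos p hp
    have := hle p hp
    omega
  rw [Multiset.count_eq_zero.2 this]
  rw [if_neg (fun h : 2 = p => h2 h.symm), if_neg (fun h : 1 = p => h1 h.symm)]

lemma filter_rep (p : ℕ → Prop) [DecidablePred p] (n a : ℕ) :
    Multiset.filter p (Multiset.replicate n a) = if p a then Multiset.replicate n a else 0 := by
  split
  · exact Multiset.filter_eq_self.2 (fun b hb => (Multiset.eq_of_mem_replicate hb) ▸ ‹p a›)
  · exact Multiset.filter_eq_nil.2 (fun b hb => (Multiset.eq_of_mem_replicate hb) ▸ ‹¬ p a›)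

lemma conj_two {a b u v : ℕ} (hu : 1 ≤ u) (hba : b ≤ a) :
    conjugatePartition (Multiset.replicate u a + Multiset.replicate v b)
      = Multiset.replicate b (u + v) + Multiset.replicate (a - b) u := by
  set f : ℕ → ℕ := fun i => Multiset.card
      ((Multiset.replicate u a + Multiset.replicate v b).filter (fun p => i < p)) with hf
  have hfval : ∀ i, f i = (if i < a then u else 0) + (if i < b then v else 0) := by
    intro i
    rw [hf]
    simp only [Multiset.filter_add, filter_rep, Multiset.card_add]
    split <;> split <;> simp
  have hS : (Multiset.replicate u a + Multiset.replicate v b).sum = u * a + v * b := by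
    simp [Multiset.sum_replicate, mul_comm]
  have hSa : u * a + v * b = a + (u * a + v * b - a) := by
    have : a ≤ u * a := Nat.le_mul_of_pos_left a hu
    omega
  have hab : a = b + (a - b) := by omega
  have hL : List.range (u * a + v * b) = List.range b ++ (List.range (a-b)).map (fun x => b + x)
      ++ (List.range (u * a + v * b - a)).map (fun x => a + x) := by
    conv_lhs => rw [hSa, List.range_add]
    congr 1
    conv_lhs => rw [hab, List.range_add]
  have h1 : (List.range b).map f = List.replicate b (u + v) := by
    refine List.eq_replicate_iff.2 ⟨by simp, ?_⟩
    simp only [List.mem_map, List.mem_range]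
    rintro x ⟨i, hi, rfl⟩
    have : i < a := lt_of_lt_of_le hi hba
    rw [hfval]; simp [this, hi]
  have h2 : ((List.range (a-b)).map (fun x => b + x)).map f = List.replicate (a - b) u := by
    refine List.eq_replicate_iff.2 ⟨by simp, ?_⟩
    simp only [List.map_map, List.mem_map, List.mem_range, Function.comp_apply]
    rintro x ⟨i, hi, rfl⟩
    have h3 : b + i < a := by omega
    have h4 : ¬ (b + i < b) := by omega
    rw [hfval]; simp [h3, h4]
  have h3 : ((List.range (u * a + v * b - a)).map (fun x => a + x)).map f
      = List.replicate (u * a + v * b - a) 0 := by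
    refine List.eq_replicate_iff.2 ⟨by simp, ?_⟩
    simp only [List.map_map, List.mem_map, List.mem_range, Function.comp_apply]
    rintro x ⟨i, hi, rfl⟩
    have h3 : ¬ (a + i < a) := by omega
    have h4 : ¬ (a + i < b) := by omega
    rw [hfval]; simp [h3, h4]
  rw [conjugatePartition, hS, ← hf]
  show Multiset.filter _ (Multiset.map f ↑(List.range (u * a + v * b))) = _
  rw [hL]
  show (↑((((List.range b ++ (List.range (a-b)).map (fun x => b + x)
      ++ (List.range (u * a + v * b - a)).map (fun x => a + x)).map f)).filter
        (fun x => decide (0 < x))) : Multiset ℕ) = _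
  rw [List.map_append, List.map_append, h1, h2, h3, List.filter_append, List.filter_append,
    List.filter_replicate, List.filter_replicate, List.filter_replicate]
  have d1 : (decide (0 < u + v)) = true := by simp; omega
  have d2 : (decide (0 < u)) = true := by simp; omega
  have d3 : (decide ((0:ℕ) < 0)) = false := by simp
  simp only [d1, d2, d3, if_true, Bool.false_eq_true, if_false, List.append_nil]
  rw [← Multiset.coe_add, Multiset.coe_replicate, Multiset.coe_replicate]

lemma decomp (q : Multiset ℕ) (h0 : q ≠ 0) (hpos : ∀ x ∈ q, 0 < x)
    (hcard : q.toFinset.card ≤ 2) :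
    ∃ a b u v, q = Multiset.replicate u a + Multiset.replicate v b ∧ 1 ≤ u ∧ 1 ≤ b ∧ b ≤ a ∧
      ((v = 0 ∧ a = b) ∨ (1 ≤ v ∧ b < a)) := by
  have h3 : q.toFinset.card = 0 ∨ q.toFinset.card = 1 ∨ q.toFinset.card = 2 := by omega
  rcases h3 with h | h | h
  · rw [Finset.card_eq_zero, Multiset.toFinset_eq_empty] at h
    exact absurd h h0
  · obtain ⟨x, hx⟩ := Finset.card_eq_one.1 h
    have hq : q = Multiset.replicate (Multiset.card q) x := by
      refine Multiset.eq_replicate.2 ⟨rfl, fun b hb => ?_⟩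
      have : b ∈ q.toFinset := Multiset.mem_toFinset.2 hb
      rw [hx, Finset.mem_singleton] at this
      exact this
    have hcq : 1 ≤ Multiset.card q := by
      rw [Nat.one_le_iff_ne_zero]
      simp [h0]
    have hxq : x ∈ q := by
      rw [hq]
      exact Multiset.mem_replicate.2 ⟨by omega, rfl⟩
    exact ⟨x, x, Multiset.card q, 0, by simpa using hq, hcq, hpos x hxq, le_rfl,
      Or.inl ⟨rfl, rfl⟩⟩
  · obtain ⟨x, y, hxy, hset⟩ := Finset.card_eq_two.1 h
    -- use a = max, b = min
    set a := max x y
    set b := min x y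
    have hba : b < a := by
      rcases lt_or_gt_of_ne hxy with h' | h'
      · simp [a, b, max_eq_right h'.le, min_eq_left h'.le, h']
      · simp [a, b, max_eq_left h'.le, min_eq_right h'.le, h']
    have hmem : ∀ z ∈ q, z = a ∨ z = b := by
      intro z hz
      have : z ∈ q.toFinset := Multiset.mem_toFinset.2 hz
      rw [hset, Finset.mem_insert, Finset.mem_singleton] at this
      rcases this with rfl | rfl
      · rcases le_total z y with h' | h'
        · right; simp [b, min_eq_left h']
        · left; simp [a, max_eq_left h']
      · rcases le_total x z with h' | h'
        · left; simp [a, max_eq_right h']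
        · right; simp [b, min_eq_right h']
    have haq : a ∈ q := by
      have : a ∈ q.toFinset := by
        rw [hset, Finset.mem_insert, Finset.mem_singleton]
        rcases le_total x y with h' | h'
        · right; simp [a, max_eq_right h']
        · left; simp [a, max_eq_left h']
      exact Multiset.mem_toFinset.1 this
    have hbq : b ∈ q := by
      have : b ∈ q.toFinset := by
        rw [hset, Finset.mem_insert, Finset.mem_singleton]
        rcases le_total x y with h' | h'
        · left; simp [b, min_eq_left h']
        · right; simp [b, min_eq_right h']
      exact Multiset.mem_toFinset.1 this
    have hsplit := Multiset.filter_add_not (fun z => a = z) q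
    have hfa : q.filter (fun z => a = z) = Multiset.replicate (q.count a) a :=
      Multiset.filter_eq q a
    set w := q.filter (fun z => ¬ a = z) with hw
    have hwrep : w = Multiset.replicate (Multiset.card w) b := by
      refine Multiset.eq_replicate.2 ⟨rfl, fun z hz => ?_⟩
      rw [hw, Multiset.mem_filter] at hz
      rcases hmem z hz.1 with rfl | rfl
      · exact absurd rfl hz.2
      · rfl
    have hbw : b ∈ w := by
      rw [hw, Multiset.mem_filter]
      exact ⟨hbq, by omega⟩
    have hcw : 1 ≤ Multiset.card w := by
      rcases Multiset.card_pos_iff_exists_mem.2 ⟨b, hbw⟩ with h'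
      omega
    refine ⟨a, b, q.count a, Multiset.card w, ?_, Multiset.count_pos.2 haq, hpos b hbq,
      hba.le, Or.inr ⟨hcw, hba⟩⟩
    rw [← hfa, ← hwrep]
    exact hsplit.symm

lemma key_dom (b e u v x j : ℕ) (hu : 1 ≤ u) (hb : 1 ≤ b) (hx3 : 3 ≤ x) (hx : x ≤ u + v) :
    x * min j 1 + 1 * min (j - 1) (u * (b + e) + v * b - x)
      ≤ (u + v) * min j b + u * min (j - b) e := by
  rcases Nat.eq_zero_or_pos j with rfl | hj
  · simp
  have hminj1 : min j 1 = 1 := min_eq_right hj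
  have hu' : u ≤ u * (b + e) := Nat.le_mul_of_pos_right u (by omega)
  have hv' : v * 1 ≤ v * b := Nat.mul_le_mul_left v hb
  have hSx : x ≤ u * (b + e) + v * b := by omega
  rcases le_or_gt j b with h1 | h1
  · have e1 : min j b = j := min_eq_left h1
    have e2 : j - b = 0 := by omega
    rw [hminj1, e1, e2]
    have key : (u + v) * j = (u + v) + (u + v) * (j - 1) := by
      obtain ⟨jj, rfl⟩ : ∃ jj, j = jj + 1 := ⟨j - 1, by omega⟩
      simp [Nat.mul_succ]; ring
    have h2 : j - 1 ≤ (u + v) * (j - 1) := Nat.le_mul_of_pos_left _ (by omega)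
    have h5 : min (j - 1) (u * (b + e) + v * b - x) ≤ j - 1 := min_le_left _ _
    simp only [min_zero, Nat.mul_zero, add_zero, mul_one, one_mul]
    omega
  rcases le_or_gt j (b + e) with h2 | h2
  · have e1 : min j b = b := min_eq_right h1.le
    have e2 : min (j - b) e = j - b := min_eq_left (by omega)
    rw [hminj1, e1, e2]
    have key : (u + v) * b = (u + v) + (u + v) * (b - 1) := by
      obtain ⟨bb, rfl⟩ : ∃ bb, b = bb + 1 := ⟨b - 1, by omega⟩
      simp [Nat.mul_succ]; ring
    have h3 : b - 1 ≤ (u + v) * (b - 1) := Nat.le_mul_of_pos_left _ (by omega)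
    have h4 : j - b ≤ u * (j - b) := Nat.le_mul_of_pos_left _ hu
    have h5 : min (j - 1) (u * (b + e) + v * b - x) ≤ j - 1 := min_le_left _ _
    simp only [mul_one, one_mul]
    omega
  · have e1 : min j b = b := min_eq_right h1.le
    have e2 : min (j - b) e = e := min_eq_right (by omega)
    rw [hminj1, e1, e2]
    have key : (u + v) * b + u * e = u * (b + e) + v * b := by ring
    have h5 : min (j - 1) (u * (b + e) + v * b - x)
        ≤ u * (b + e) + v * b - x := min_le_right _ _
    simp only [mul_one, one_mul]
    omega


lemma pair_eq (A B : ℕ) :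
    Multiset.replicate 1 A + Multiset.replicate 1 B = ({A, B} : Multiset ℕ) := by
  simp [Multiset.replicate_one, Multiset.singleton_add, Multiset.insert_eq_cons]

/-- Let `p = [2^{2k}, 1^{2n−4k+1}]` be a partition of `2n+1`
(type B spherical orbit, `k ≠ n/2`).  The partitions `q` of `2n+1` with at
most 2 distinct parts whose transposes B-collapse to `p` are exactly
`q = [2n−2k+1, 2k]` and `q = [2n−2k, 2k+1]`. -/
theorem stmt_7 (n k : ℕ) (hk : 1 ≤ k) (hkn : 2 * k ≤ n) (hne : 2 * k ≠ n)
    (q : Multiset ℕ) (hqpos : ∀ x ∈ q, 0 < x) (hqsum : q.sum = 2 * n + 1)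
    (hqparts : q.toFinset.card ≤ 2) :
    isBCollapse (conjugatePartition q)
        (Multiset.replicate (2 * k) 2 + Multiset.replicate (2 * n - 4 * k + 1) 1) ↔
      (q = {2 * n - 2 * k + 1, 2 * k} ∨ q = {2 * n - 2 * k, 2 * k + 1}) := by
  set r : Multiset ℕ :=
    Multiset.replicate (2 * k) 2 + Multiset.replicate (2 * n - 4 * k + 1) 1 with hrdef
  have hr_sum : r.sum = 2 * n + 1 := by rw [hrdef, sum_two]; omega
  have hr_pos : ∀ x ∈ r, 0 < x := by
    intro x hx; rcases mem_two hx with rfl | rfl <;> omega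
  have hr_typeB : typeBPartition r := by
    intro p hp
    rw [hrdef, count_two]
    rcases eq_or_ne p 2 with rfl | hp2
    · simp
    · have h1 : ¬ (1 = p) := by rintro rfl; exact (by decide : ¬ Even 1) hp
      have h2 : ¬ (2 = p) := fun h => hp2 h.symm
      simp [h1, h2]
  have hDr : ∀ j, Sj r j = 2 * min j (2 * k) + 1 * min (j - 2 * k) (2 * n - 4 * k + 1) :=
    fun j => by rw [hrdef]; exact Sj_two (by omega) j
  constructor
  · -- forward direction
    intro H
    obtain ⟨Hsum, Hpos, HtB, Hdom, Hmax⟩ := H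
    have hq0 : q ≠ 0 := by rintro rfl; simp at hqsum
    obtain ⟨a, b, u, v, hq, hu, hb, hba, hcase⟩ := decomp q hq0 hqpos hqparts
    obtain ⟨e, rfl⟩ : ∃ e, a = b + e := ⟨a - b, by omega⟩
    have hsum : u * (b + e) + v * b = 2 * n + 1 := by
      rw [hq, sum_two] at hqsum; exact hqsum
    have hconj : conjugatePartition q
        = Multiset.replicate b (u + v) + Multiset.replicate e u := by
      rw [hq]
      have := conj_two (a := b + e) (b := b) (v := v) hu (by omega)
      rwa [Nat.add_sub_cancel_left] at this
    rw [hconj] at Hdom Hmax Hsum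
    have Hdom' : ∀ j, Sj r j ≤ Sj (Multiset.replicate b (u + v) + Multiset.replicate e u) j :=
      Hdom
    have hDq : ∀ j, Sj (Multiset.replicate b (u + v) + Multiset.replicate e u) j
        = (u + v) * min j b + u * min (j - b) e := fun j => Sj_two (by omega) j
    have hqt_sum : (Multiset.replicate b (u + v) + Multiset.replicate e u).sum = 2 * n + 1 := by
      rw [sum_two]
      have : b * (u + v) + e * u = u * (b + e) + v * b := by ring
      omega
    have hc2 : 2 ≤ u + v := by
      have h := Hdom' 1
      rw [hDr 1, hDq 1, min_eq_left hb] at h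
      have e1 : min 1 (2 * k) = 1 := by omega
      have e2 : (1 : ℕ) - 2 * k = 0 := by omega
      have e3 : (1 : ℕ) - b = 0 := by omega
      rw [e1, e2, e3] at h
      simp at h
      omega
    rcases le_or_gt 3 (u + v) with h3 | h3
    · -- contradiction via witness s0
      exfalso
      set x := if Even (u + v) then u + v - 1 else u + v with hxdef
      have hxfacts : 3 ≤ x ∧ x ≤ u + v ∧ ¬ Even x := by
        by_cases hE : Even (u + v)
        · obtain ⟨w, hw⟩ := hE
          rw [hxdef, if_pos ⟨w, hw⟩]
          refine ⟨by omega, by omega, ?_⟩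
          rintro ⟨w2, hw2⟩; omega
        · rw [hxdef, if_neg hE]
          refine ⟨by omega, le_rfl, hE⟩
      obtain ⟨hx3, hxle, hxodd⟩ := hxfacts
      have hxS : x ≤ 2 * n + 1 := by
        have h1 : u ≤ u * (b + e) := Nat.le_mul_of_pos_right u (by omega)
        have h2 : v * 1 ≤ v * b := Nat.mul_le_mul_left v hb
        omega
      set s0 := Multiset.replicate 1 x + Multiset.replicate (2 * n + 1 - x) 1 with hs0def
      have hs0pos : ∀ z ∈ s0, 0 < z := by
        intro z hz; rcases mem_two hz with rfl | rfl <;> omega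
      have hs0sum : s0.sum = 2 * n + 1 := by rw [hs0def, sum_two]; omega
      have hs0tB : typeBPartition s0 := by
        intro p hp
        rw [hs0def, count_two]
        have h1 : ¬ (x = p) := by rintro rfl; exact hxodd hp
        have h2 : ¬ (1 = p) := by rintro rfl; exact (by decide : ¬ Even 1) hp
        simp [h1, h2]
      have hs0dom : domLe s0 (Multiset.replicate b (u + v) + Multiset.replicate e u) := by
        intro j
        show Sj s0 j ≤ Sj _ j
        rw [hs0def, Sj_two (by omega : 1 ≤ x), hDq j]
        have := key_dom b e u v x j hu hb hx3 hxle
        rwa [hsum] at this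
      have hcontr := Hmax s0 hs0pos (by rw [hs0sum, hqt_sum]) hs0tB hs0dom
      have h1 : Sj s0 1 ≤ Sj r 1 := hcontr 1
      rw [hs0def, Sj_two (by omega : 1 ≤ x), hDr 1] at h1
      have e1 : min 1 (2 * k) = 1 := by omega
      have e2 : (1 : ℕ) - 2 * k = 0 := by omega
      rw [e1, e2, min_eq_left (le_refl 1)] at h1
      simp at h1
      omega
    -- now u + v = 2
    have huv2 : u + v = 2 := by omega
    rcases hcase with ⟨rfl, haeb⟩ | ⟨hv1, hblt⟩
    · -- v = 0, u = 2 : even sum, contradiction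
      exfalso
      obtain rfl : u = 2 := by omega
      omega
    · obtain rfl : u = 1 := by omega
      obtain rfl : v = 1 := by omega
      -- q = [b+e, b], b < b+e, (b+e) + b = 2n+1
      have hbk : 2 * k ≤ b := by
        have h := Hdom' (2 * k)
        rw [hDr (2 * k), hDq (2 * k)] at h
        simp only [Nat.sub_self, Nat.min_self] at h
        omega
      rcases le_or_gt b (2 * k + 1) with hble | hbgt
      · -- b = 2k or 2k+1 : the two solutions
        rcases (by omega : b = 2 * k ∨ b = 2 * k + 1) with rfl | rfl
        · left
          rw [hq]
          have e1 : 2 * k + e = 2 * n - 2 * k + 1 := by omega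
          rw [e1, pair_eq]
        · right
          rw [hq]
          have e1 : 2 * k + 1 + e = 2 * n - 2 * k := by omega
          rw [e1, pair_eq]
      · -- b ≥ 2k+2 : contradiction via witness s1
        exfalso
        set b' := if Even b then b else b - 1 with hb'def
        have hb'facts : Even b' ∧ 2 * k + 2 ≤ b' ∧ b' ≤ b := by
          rcases Nat.even_or_odd b with hE | hO
          · obtain ⟨w, hw⟩ := hE
            rw [hb'def, if_pos ⟨w, hw⟩]
            exact ⟨⟨w, hw⟩, by omega, le_rfl⟩
          · obtain ⟨w, hw⟩ := hO
            have hnE : ¬ Even b := by rintro ⟨w2, hw2⟩; omega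
            rw [hb'def, if_neg hnE]
            exact ⟨⟨w, by omega⟩, by omega, by omega⟩
        obtain ⟨⟨w, hw⟩, hb'k, hb'b⟩ := hb'facts
        have hbn : b ≤ n := by omega
        set s1 := Multiset.replicate b' 2 + Multiset.replicate (2 * n + 1 - 2 * b') 1
          with hs1def
        have hs1pos : ∀ z ∈ s1, 0 < z := by
          intro z hz; rcases mem_two hz with rfl | rfl <;> omega
        have hs1sum : s1.sum = 2 * n + 1 := by rw [hs1def, sum_two]; omega
        have hs1tB : typeBPartition s1 := by
          intro p hp
          rw [hs1def, count_two]
          rcases eq_or_ne p 2 with rfl | hp2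
          · simp
            exact ⟨w, by omega⟩
          · have h1 : ¬ (1 = p) := by rintro rfl; exact (by decide : ¬ Even 1) hp
            have h2 : ¬ (2 = p) := fun h => hp2 h.symm
            simp [h1, h2]
        have hs1dom : domLe s1 (Multiset.replicate b 2 + Multiset.replicate e 1) := by
          intro j
          show Sj s1 j ≤ Sj _ j
          rw [hs1def, Sj_two (by omega : (1:ℕ) ≤ 2), Sj_two (by omega : (1:ℕ) ≤ 2)]
          omega
        have hcontr := Hmax s1 hs1pos (by rw [hs1sum, hqt_sum]) hs1tB hs1dom
        have h1 : Sj s1 (2 * k + 1) ≤ Sj r (2 * k + 1) := hcontr (2 * k + 1)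
        rw [hs1def, Sj_two (by omega : (1:ℕ) ≤ 2), hDr (2 * k + 1)] at h1
        omega
  · -- backward direction
    rintro (rfl | rfl)
    · -- q = [2n-2k+1, 2k] : conjugate is r itself
      have hconj : conjugatePartition {2 * n - 2 * k + 1, 2 * k} = r := by
        rw [← pair_eq]
        have := conj_two (a := 2 * n - 2 * k + 1) (b := 2 * k) (u := 1) (v := 1)
          le_rfl (by omega)
        rw [this, hrdef]
        have e1 : 2 * n - 2 * k + 1 - 2 * k = 2 * n - 4 * k + 1 := by omega
        rw [e1]
      rw [hconj]
      exact ⟨rfl, hr_pos, hr_typeB, fun j => le_rfl, fun s _ _ _ hd => hd⟩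
    · -- q = [2n-2k, 2k+1]
      have hconj : conjugatePartition {2 * n - 2 * k, 2 * k + 1}
          = Multiset.replicate (2 * k + 1) 2 + Multiset.replicate (2 * n - 4 * k - 1) 1 := by
        rw [← pair_eq]
        have := conj_two (a := 2 * n - 2 * k) (b := 2 * k + 1) (u := 1) (v := 1)
          le_rfl (by omega)
        rw [this]
        have e1 : 2 * n - 2 * k - (2 * k + 1) = 2 * n - 4 * k - 1 := by omega
        rw [e1]
      rw [hconj]
      set Q : Multiset ℕ :=
        Multiset.replicate (2 * k + 1) 2 + Multiset.replicate (2 * n - 4 * k - 1) 1 with hQdef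
      have hQsum : Q.sum = 2 * n + 1 := by rw [hQdef, sum_two]; omega
      have hDQ : ∀ j, Sj Q j
          = 2 * min j (2 * k + 1) + 1 * min (j - (2 * k + 1)) (2 * n - 4 * k - 1) :=
        fun j => by rw [hQdef]; exact Sj_two (by omega) j
      refine ⟨by omega, hr_pos, hr_typeB, ?_, ?_⟩
      · intro j
        show Sj r j ≤ Sj Q j
        rw [hDr j, hDQ j]
        omega
      · intro s hspos hssum htB hsdom
        have hsle2 : ∀ z ∈ s, z ≤ 2 := by
          intro z hz
          have h1 := le_Sj_one hz
          have h2 : Sj s 1 ≤ Sj Q 1 := hsdom 1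
          rw [hDQ 1] at h2
          omega
        have hs := eq_two_of_le_two hspos hsle2
        set t := s.count 2 with htdef
        set m1 := s.count 1 with hm1def
        obtain ⟨w, hw⟩ : Even t := htB 2 ⟨1, rfl⟩
        have hsum' : 2 * t + m1 = 2 * n + 1 := by
          have h := hssum
          rw [hs, sum_two] at h
          omega
        have hdt : Sj s t ≤ Sj Q t := hsdom t
        rw [hs, Sj_two (by omega : (1:ℕ) ≤ 2), hDQ t] at hdt
        intro j
        have hdj : Sj s j ≤ Sj Q j := hsdom j
        rw [hs, Sj_two (by omega : (1:ℕ) ≤ 2), hDQ j] at hdj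
        show Sj s j ≤ Sj r j
        rw [hs, Sj_two (by omega : (1:ℕ) ≤ 2), hDr j]
        omega
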